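/- For every k ≥ 0 the two iterate systems coincide: z^k = u^k, x^k = u^k + d^k v^k, w^{j(k)} = ŵ^{j(k)}, and δ^k = δ̂^k; in particular AAGD and its implementation form generate identical sequences of iterates x^k. -/

import Mathlib

open scoped RealInnerProductSpace

lemma aagd_strict_min_unique {E : Type*} [NormedAddCommGroup E] [InnerProductSpace ℝ E]
    (h : E → ℝ) (hconv : ConvexOn ℝ Set.univ h) (g zz : E) (c : ℝ) (hc : 0 < c)
    (p q : E)
    (hp : ∀ r : E, h (zz + p) + ⟪g, p⟫ + c * ‖p‖ ^ 2 ≤ h (zz + r) + ⟪g, r⟫ + c * ‖r‖ ^ 2)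
    (hq : ∀ r : E, h (zz + q) + ⟪g, q⟫ + c * ‖q‖ ^ 2 ≤ h (zz + r) + ⟪g, r⟫ + c * ‖r‖ ^ 2) :
    p = q := by
  set m : E := (2:ℝ)⁻¹ • p + (2:ℝ)⁻¹ • q with hmdef
  have hm : zz + m = (2:ℝ)⁻¹ • (zz + p) + (2:ℝ)⁻¹ • (zz + q) := by
    rw [hmdef]; module
  have hconv' := hconv.2 (Set.mem_univ (zz + p)) (Set.mem_univ (zz + q))
    (by norm_num : (0:ℝ) ≤ 2⁻¹) (by norm_num : (0:ℝ) ≤ 2⁻¹) (by norm_num)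
  rw [← hm] at hconv'
  simp only [smul_eq_mul] at hconv'
  have hinner : ⟪g, m⟫ = 2⁻¹ * ⟪g, p⟫ + 2⁻¹ * ⟪g, q⟫ := by
    rw [hmdef]; simp [inner_add_right, inner_smul_right]
  have hpar := parallelogram_law_with_norm ℝ p q
  have hmn : ‖m‖ = 2⁻¹ * ‖p + q‖ := by
    have hm2 : m = (2:ℝ)⁻¹ • (p + q) := by rw [hmdef]; module
    rw [hm2, norm_smul]; norm_num
  have hnorm : ‖m‖ ^ 2 = 2⁻¹ * ‖p‖ ^ 2 + 2⁻¹ * ‖q‖ ^ 2 - 4⁻¹ * ‖p - q‖ ^ 2 := by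
    rw [hmn]; nlinarith [hpar]
  have h1 := hp m
  have h3 := hp q
  have h4 := hq p
  have hcn : c * ‖m‖ ^ 2 = 2⁻¹ * (c * ‖p‖ ^ 2) + 2⁻¹ * (c * ‖q‖ ^ 2)
      - 4⁻¹ * (c * ‖p - q‖ ^ 2) := by rw [hnorm]; ring
  have h5 : c * ‖p - q‖ ^ 2 ≤ c * 0 := by
    rw [mul_zero]; linarith [h1, h3, h4, hconv', hinner, hcn]
  have h6 : ‖p - q‖ ^ 2 ≤ 0 := (mul_le_mul_iff_right₀ hc).mp h5
  have h7 : ‖p - q‖ = 0 := by nlinarith [sq_nonneg ‖p - q‖, norm_nonneg (p - q)]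
  have := norm_eq_zero.mp h7
  exact sub_eq_zero.mp this

/-- Equivalence of AAGD (Algorithm 2) and its implementation form (Algorithm 3):
for every `k`, `z^k = u^k`, `x^k = u^k + d^k v^k`, the momentum-compensated points
coincide (`w^{j(k)} = ŵ^{j(k)}`), and the proximal steps coincide (`δ^k = δ̂^k`);
in particular both algorithms generate identical sequences of iterates. -/
theorem aagd_implementation_equivalence
    (dm : ℕ)
    (h : EuclideanSpace ℝ (Fin dm) → ℝ) (hh_conv : ConvexOn ℝ Set.univ h)
    (f : EuclideanSpace ℝ (Fin dm) → ℝ)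
    (f' : EuclideanSpace ℝ (Fin dm) → EuclideanSpace ℝ (Fin dm))
    (hf_grad : ∀ u, HasGradientAt f (f' u) u)
    (γ : ℝ) (hγ : 0 < γ)
    (θ : ℕ → ℝ) (hθ : ∀ k, 0 < θ k ∧ θ k < 1)
    (j : ℕ → ℕ) (hj : ∀ k, j k ≤ k)
    (a : ℕ → ℝ) (ha0 : a 0 = 0)
    (ha : ∀ k, 1 ≤ k → a k = θ k * (1 - θ (k - 1)) / θ (k - 1))
    (b : ℕ → ℕ → ℝ) (hb : ∀ l k, b l k = ∏ i ∈ Finset.Icc l k, a i)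
    -- AAGD iterates
    (x z w δ : ℕ → EuclideanSpace ℝ (Fin dm))
    (hx0 : x 0 = 0) (hz0 : z 0 = 0)
    (hw : ∀ k, w k = x (j k)
        + (∑ i ∈ Finset.Icc (j k) k, b (j k) i) • (x (j k) - x (j k - 1)))
    (hδ : ∀ k, ∀ δ' : EuclideanSpace ℝ (Fin dm),
      h (z k + δ k) + ⟪f' (w k), δ k⟫ + θ k / (2 * γ) * ‖δ k‖ ^ 2
        ≤ h (z k + δ') + ⟪f' (w k), δ'⟫ + θ k / (2 * γ) * ‖δ'‖ ^ 2)
    (hzrec : ∀ k, z (k + 1) = z k + δ k)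
    (hxrec : ∀ k, x (k + 1) = θ k • z (k + 1) + (1 - θ k) • x k)
    -- implementation iterates
    (u v what δhat : ℕ → EuclideanSpace ℝ (Fin dm)) (d : ℕ → ℝ)
    (hu0 : u 0 = 0) (hv0 : v 0 = 0) (hd0 : d 0 = 1)
    (hdrec : ∀ k, d (k + 1) = d k * (1 - θ k))
    (hwhat : ∀ k, what k = u (j k) + d (k + 1) • v (j k))
    (hδhat : ∀ k, ∀ δ' : EuclideanSpace ℝ (Fin dm),
      h (u k + δhat k) + ⟪f' (what k), δhat k⟫ + θ k / (2 * γ) * ‖δhat k‖ ^ 2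
        ≤ h (u k + δ') + ⟪f' (what k), δ'⟫ + θ k / (2 * γ) * ‖δ'‖ ^ 2)
    (hurec : ∀ k, u (k + 1) = u k + δhat k)
    (hvrec : ∀ k, v (k + 1) = v k - (d k)⁻¹ • δhat k) :
    ∀ k, z k = u k ∧ x k = u k + d k • v k ∧ w k = what k ∧ δ k = δhat k := by
  -- positivity of d
  have hdpos : ∀ k, 0 < d k := by
    intro k
    induction k with
    | zero => rw [hd0]; norm_num
    | succ n ih => rw [hdrec]; exact mul_pos ih (by linarith [(hθ n).2])
  -- value of b in multiplicative form
  have hbgen : ∀ m i, m + 1 ≤ i → b (m + 1) i * (θ m * d m) = θ i * d i := by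
    intro m i hi
    induction i, hi using Nat.le_induction with
    | base =>
      rw [hb, Finset.Icc_self, Finset.prod_singleton, ha (m + 1) (by omega)]
      simp only [Nat.add_sub_cancel]
      rw [hdrec m]
      field_simp [(hθ m).1.ne']
    | succ i hi ihb =>
      have h1 : b (m + 1) (i + 1) = b (m + 1) i * a (i + 1) := by
        rw [hb, hb, Finset.prod_Icc_succ_top (by omega : m + 1 ≤ i + 1)]
      rw [h1, ha (i + 1) (by omega)]
      simp only [Nat.add_sub_cancel]
      rw [hdrec i]
      field_simp [(hθ i).1.ne']
      linear_combination (θ (i + 1) * (1 - θ i)) * ihb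
  -- telescoping sum
  have hSgen : ∀ m K, m + 1 ≤ K →
      (∑ i ∈ Finset.Icc (m + 1) K, b (m + 1) i) * (θ m * d m)
        = d (m + 1) - d (K + 1) := by
    intro m K hK
    induction K, hK using Nat.le_induction with
    | base =>
      rw [Finset.Icc_self, Finset.sum_singleton, hbgen m (m + 1) le_rfl,
        hdrec (m + 1)]
      ring
    | succ n hn ihn =>
      rw [Finset.sum_Icc_succ_top (by omega : m + 1 ≤ n + 1), add_mul, ihn,
        hbgen m (n + 1) (by omega), hdrec (n + 1)]
      ring
  -- step: momentum points coincide
  have hwstep : ∀ k, (∀ i, i ≤ k → z i = u i ∧ x i = u i + d i • v i) →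
      w k = what k := by
    intro k hA
    rw [hw k, hwhat k]
    rcases hjk : j k with _ | m
    · simp [hx0, hu0, hv0]
    · have hmk : m + 1 ≤ k := hjk ▸ hj k
      obtain ⟨-, hxm⟩ := hA m (by omega)
      obtain ⟨-, hxm1⟩ := hA (m + 1) hmk
      have hdm : d m ≠ 0 := (hdpos m).ne'
      have hdiff : x (m + 1) - x m = (d (m + 1) - d m) • v (m + 1) := by
        have h2 : d m • v (m + 1) = d m • v m - δhat m := by
          rw [hvrec m, smul_sub, smul_inv_smul₀ hdm]
        have h3 : d m • v m = d m • v (m + 1) + δhat m := by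
          rw [h2]; abel
        have h4 : x (m + 1) - x m = δhat m + d (m + 1) • v (m + 1) - d m • v m := by
          rw [hxm1, hxm, hurec m]; abel
        rw [h4, h3, sub_smul]; abel
      simp only [Nat.add_sub_cancel]
      rw [hdiff, hxm1, smul_smul]
      have hθm : θ m ≠ 0 := (hθ m).1.ne'
      have hcoef : d (m + 1)
          + (∑ i ∈ Finset.Icc (m + 1) k, b (m + 1) i) * (d (m + 1) - d m) = d (k + 1) := by
        have hS := hSgen m k hmk
        have hdd : d (m + 1) - d m = -(θ m * d m) := by rw [hdrec m]; ring
        rw [hdd]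
        have : (∑ i ∈ Finset.Icc (m + 1) k, b (m + 1) i) * -(θ m * d m)
            = -((∑ i ∈ Finset.Icc (m + 1) k, b (m + 1) i) * (θ m * d m)) := by ring
        rw [this, hS]; ring
      rw [← hcoef, add_smul]
      abel
  -- step: proximal steps coincide
  have hδstep : ∀ k, w k = what k → z k = u k → δ k = δhat k := by
    intro k hwk hzk
    have hc : 0 < θ k / (2 * γ) := div_pos (hθ k).1 (by linarith)
    refine aagd_strict_min_unique h hh_conv (f' (what k)) (u k) _ hc _ _ ?_ (hδhat k)
    intro r
    have := hδ k r
    rwa [hwk, hzk] at this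
  -- main invariant
  have main : ∀ k, z k = u k ∧ x k = u k + d k • v k := by
    intro k
    induction k using Nat.strong_induction_on with
    | _ n ih =>
      obtain _ | k := n
      · refine ⟨by rw [hz0, hu0], ?_⟩
        rw [hx0, hu0, hv0, hd0]
        simp
      · have hA : ∀ i, i ≤ k → z i = u i ∧ x i = u i + d i • v i :=
          fun i hi => ih i (by omega)
        have hzk := (hA k le_rfl).1
        have hxk := (hA k le_rfl).2
        have hδk : δ k = δhat k := hδstep k (hwstep k hA) hzk
        have hzk1 : z (k + 1) = u (k + 1) := by
          rw [hzrec, hurec, hzk, hδk]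
        refine ⟨hzk1, ?_⟩
        rw [hxrec, hzk1, hxk, hvrec, hdrec, hurec]
        have hdk : d k ≠ 0 := (hdpos k).ne'
        have hc : (d k * (1 - θ k)) • ((d k)⁻¹ • δhat k) = (1 - θ k) • δhat k := by
          rw [smul_smul]
          congr 1
          field_simp
        rw [smul_sub, hc]
        module
  intro k
  have hA : ∀ i, i ≤ k → z i = u i ∧ x i = u i + d i • v i := fun i _ => main i
  exact ⟨(main k).1, (main k).2, hwstep k hA, hδstep k (hwstep k hA) (main k).1⟩
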